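/- Let $a_2 > a_1 \ge 0$ and $0 < \alpha < \beta$. For $t, x > 0$ satisfying $\sqrt{(a_2+\beta)/\beta} \le t/x \le \sqrt{(a_2+\alpha)/\alpha}$, the quantity $|H| = \sqrt{2\pi}\, a_2^{3/4}\, h_1(t,x)\, |h_2(t,x)|$, with $h_1(t,x) = ((t/x)^2/((t/x)^2 - 1))^{3/4}$ and $h_2(t,x) = \sqrt{w}/(\sqrt{w}+\sqrt{a_2})^2$ where $w = (a_2 - a_1)((t/x)^2 - 1) + a_2$, satisfies $|H| \le \sqrt{2\pi}\,\sqrt{\beta}\,(a_2+\beta)^{3/4}/(\sqrt{a_2}\sqrt{a_2 - a_1 + \beta})$. -/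

import Mathlib

open Real

theorem stmt_14 (a1 a2 α β : ℝ) (ha1 : 0 ≤ a1) (ha2 : a1 < a2)
    (hα : 0 < α) (hαβ : α < β) :
    ∀ t x : ℝ, 0 < t → 0 < x →
      Real.sqrt ((a2 + β) / β) ≤ t / x → t / x ≤ Real.sqrt ((a2 + α) / α) →
      Real.sqrt (2 * π) * a2 ^ ((3 : ℝ) / 4) *
          ((t / x) ^ 2 / ((t / x) ^ 2 - 1)) ^ ((3 : ℝ) / 4) *
          |Real.sqrt ((a2 - a1) * ((t / x) ^ 2 - 1) + a2) /
            (Real.sqrt ((a2 - a1) * ((t / x) ^ 2 - 1) + a2) + Real.sqrt a2) ^ 2| ≤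
        Real.sqrt (2 * π) * Real.sqrt β * (a2 + β) ^ ((3 : ℝ) / 4) /
          (Real.sqrt a2 * Real.sqrt (a2 - a1 + β)) := by
  intro t x ht hx hL hU
  have hβ : 0 < β := hα.trans hαβ
  have ha2p : 0 < a2 := lt_of_le_of_lt ha1 ha2
  set r := t / x with hrdef
  have hrpos : 0 < r := div_pos ht hx
  have hq : 0 ≤ (a2 + β) / β := le_of_lt (div_pos (by linarith) hβ)
  have hs_lb : (a2 + β) / β ≤ r ^ 2 := by
    nlinarith [Real.sq_sqrt hq, Real.sqrt_nonneg ((a2 + β) / β), hL]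
  have hs1 : a2 / β ≤ r ^ 2 - 1 := by
    have h : (a2 + β) / β = a2 / β + 1 := by field_simp
    linarith [h ▸ hs_lb]
  have hspos : 0 < r ^ 2 - 1 := lt_of_lt_of_le (div_pos ha2p hβ) hs1
  set w := (a2 - a1) * (r ^ 2 - 1) + a2 with hwdef
  have hwlb : a2 * (a2 - a1 + β) / β ≤ w := by
    have key : (a2 - a1) * (a2 / β) ≤ (a2 - a1) * (r ^ 2 - 1) :=
      mul_le_mul_of_nonneg_left hs1 (by linarith)
    have heq : a2 * (a2 - a1 + β) / β = (a2 - a1) * (a2 / β) + a2 := by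
      field_simp
    rw [hwdef, heq]; linarith
  have hwpos : 0 < w := lt_of_lt_of_le (div_pos (mul_pos ha2p (by linarith)) hβ) hwlb
  -- first factor
  have hfrac : 0 ≤ r ^ 2 / (r ^ 2 - 1) := by positivity
  have hA : a2 ^ ((3 : ℝ) / 4) * (r ^ 2 / (r ^ 2 - 1)) ^ ((3 : ℝ) / 4)
      = (a2 * (r ^ 2 / (r ^ 2 - 1))) ^ ((3 : ℝ) / 4) :=
    (Real.mul_rpow ha2p.le hfrac).symm
  have hAle : a2 * (r ^ 2 / (r ^ 2 - 1)) ≤ a2 + β := by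
    rw [mul_div_assoc', div_le_iff₀ hspos]
    have h' : a2 + β ≤ β * r ^ 2 := by
      have := (div_le_iff₀ hβ).mp hs_lb
      linarith
    nlinarith
  have hAbound : (a2 * (r ^ 2 / (r ^ 2 - 1))) ^ ((3 : ℝ) / 4) ≤ (a2 + β) ^ ((3 : ℝ) / 4) :=
    Real.rpow_le_rpow (by positivity) hAle (by norm_num)
  -- second factor
  have hsw : 0 ≤ Real.sqrt w := Real.sqrt_nonneg w
  have hswpos : 0 < Real.sqrt w := Real.sqrt_pos.mpr hwpos
  have hsa2 : 0 < Real.sqrt a2 := Real.sqrt_pos.mpr ha2p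
  have hdenpos : 0 < (Real.sqrt w + Real.sqrt a2) ^ 2 := by positivity
  have hh2nonneg : 0 ≤ Real.sqrt w / (Real.sqrt w + Real.sqrt a2) ^ 2 := by positivity
  have hstepA : Real.sqrt w / (Real.sqrt w + Real.sqrt a2) ^ 2 ≤ 1 / Real.sqrt w := by
    rw [div_le_div_iff₀ hdenpos hswpos]
    nlinarith [Real.sq_sqrt hwpos.le]
  have hstepB : 1 / Real.sqrt w ≤ Real.sqrt β / (Real.sqrt a2 * Real.sqrt (a2 - a1 + β)) := by
    have hca : 0 < Real.sqrt (a2 - a1 + β) := Real.sqrt_pos.mpr (by linarith)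
    rw [div_le_div_iff₀ hswpos (by positivity)]
    have h1 : Real.sqrt a2 * Real.sqrt (a2 - a1 + β) = Real.sqrt (a2 * (a2 - a1 + β)) :=
      (Real.sqrt_mul ha2p.le _).symm
    have h2 : Real.sqrt β * Real.sqrt w = Real.sqrt (β * w) := (Real.sqrt_mul hβ.le _).symm
    rw [one_mul, h1, h2]
    apply Real.sqrt_le_sqrt
    have h3 := (div_le_iff₀ hβ).mp hwlb
    rw [mul_comm β w]; exact h3
  have hh2 : Real.sqrt w / (Real.sqrt w + Real.sqrt a2) ^ 2
      ≤ Real.sqrt β / (Real.sqrt a2 * Real.sqrt (a2 - a1 + β)) := hstepA.trans hstepB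
  have habs : |Real.sqrt w / (Real.sqrt w + Real.sqrt a2) ^ 2|
      = Real.sqrt w / (Real.sqrt w + Real.sqrt a2) ^ 2 := abs_of_nonneg hh2nonneg
  calc Real.sqrt (2 * π) * a2 ^ ((3 : ℝ) / 4) * (r ^ 2 / (r ^ 2 - 1)) ^ ((3 : ℝ) / 4) *
        |Real.sqrt w / (Real.sqrt w + Real.sqrt a2) ^ 2|
      = Real.sqrt (2 * π) * (a2 * (r ^ 2 / (r ^ 2 - 1))) ^ ((3 : ℝ) / 4) *
        (Real.sqrt w / (Real.sqrt w + Real.sqrt a2) ^ 2) := by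
        rw [habs, mul_assoc (Real.sqrt (2 * π)), hA]
    _ ≤ Real.sqrt (2 * π) * (a2 + β) ^ ((3 : ℝ) / 4) *
        (Real.sqrt β / (Real.sqrt a2 * Real.sqrt (a2 - a1 + β))) := by
        gcongr
    _ = Real.sqrt (2 * π) * Real.sqrt β * (a2 + β) ^ ((3 : ℝ) / 4) /
          (Real.sqrt a2 * Real.sqrt (a2 - a1 + β)) := by ring
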